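/- Every realcompact space has property wD. -/

import Mathlib

open Set Filter Topology TopologicalSpace

universe u

/-- `C_p(X)`: continuous real-valued functions on `X` with the topology of pointwise
convergence (subspace of `X → ℝ` with the product topology). -/
abbrev Cp (X : Type*) [TopologicalSpace X] : Type _ := {f : X → ℝ // Continuous f}

/-- A space is realcompact if it embeds as a closed subspace of a power of `ℝ`. -/
def Realcompact (X : Type u) [TopologicalSpace X] : Prop :=
  ∃ (I : Type u) (f : X → I → ℝ), IsClosedEmbedding f

/-- `Y` is countably compact in `X`: every infinite subset of `Y` has a limit
(accumulation) point in `X`. -/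
def CountablyCompactIn {X : Type*} [TopologicalSpace X] (Y : Set X) : Prop :=
  ∀ A ⊆ Y, A.Infinite → ∃ x : X, AccPt x (𝓟 A)

/-- A space is countably compact: every countable open cover has a finite subcover. -/
def CountablyCompact (X : Type*) [TopologicalSpace X] : Prop :=
  ∀ U : ℕ → Set X, (∀ n, IsOpen (U n)) → (⋃ n, U n) = univ →
    ∃ t : Finset ℕ, (⋃ n ∈ t, U n) = univ

/-- A space is countably tight if every point in the closure of a set is in the
closure of a countable subset. -/
def CountablyTight (X : Type*) [TopologicalSpace X] : Prop :=
  ∀ (A : Set X) (x : X), x ∈ closure A → ∃ B ⊆ A, B.Countable ∧ x ∈ closure B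

/-- Property wD: for every countably infinite closed discrete subspace `{d n}` there is an
infinite `S ⊆ ℕ` and a discrete family of open sets `U n` (`n ∈ S`) with `d n ∈ U n`. -/
def WD (X : Type*) [TopologicalSpace X] : Prop :=
  ∀ d : ℕ → X, Function.Injective d → IsClosed (Set.range d) →
    DiscreteTopology (Set.range d) →
    ∃ (S : Set ℕ) (U : ℕ → Set X), S.Infinite ∧ (∀ n ∈ S, IsOpen (U n)) ∧
      (∀ n ∈ S, d n ∈ U n) ∧
      ∀ x : X, ∃ V ∈ 𝓝 x, {n | n ∈ S ∧ (V ∩ U n).Nonempty}.Subsingleton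

/-- `N` is a network for `X`. -/
def IsNetwork {X : Type*} [TopologicalSpace X] (N : Set (Set X)) : Prop :=
  ∀ (x : X) (U : Set X), IsOpen U → x ∈ U → ∃ A ∈ N, x ∈ A ∧ A ⊆ U

/-- If there is a continuous real-valued function unbounded on a sequence, we can build the
discrete family of open sets required by `WD`. -/
theorem wd_of_unbounded_fn {X : Type*} [TopologicalSpace X] (d : ℕ → X) (f : X → ℝ)
    (hf : Continuous f) (hub : ∀ C : ℝ, ∃ m : ℕ, C < |f (d m)|) :
    ∃ (S : Set ℕ) (U : ℕ → Set X), S.Infinite ∧ (∀ n ∈ S, IsOpen (U n)) ∧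
      (∀ n ∈ S, d n ∈ U n) ∧
      ∀ x : X, ∃ V ∈ 𝓝 x, {n | n ∈ S ∧ (V ∩ U n).Nonempty}.Subsingleton := by
  set g : ℕ → ℝ := fun n => f (d n) with hg
  choose F hF using hub
  -- recursively chosen indices with |g| values spaced more than 4 apart
  let n : ℕ → ℕ := fun k => Nat.rec (F 0) (fun _ prev => F (|g prev| + 4)) k
  have hstep : ∀ k, |g (n k)| + 4 < |g (n (k + 1))| := fun k => hF (|g (n k)| + 4)
  have hgap : ∀ j k, j < k → |g (n j)| + 4 < |g (n k)| := by
    intro j k hjk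
    induction k with
    | zero => omega
    | succ k ih =>
      rcases Nat.lt_succ_iff_lt_or_eq.mp hjk with h | h
      · have := hstep k
        have := ih h
        linarith
      · subst h; exact hstep j
  have hninj : Function.Injective n := by
    intro j k hjk
    by_contra hne
    rcases Nat.lt_or_ge j k with h | h
    · have := hgap j k h; rw [hjk] at this; linarith
    · have hk : k < j := lt_of_le_of_ne h (Ne.symm hne)
      have := hgap k j hk; rw [hjk] at this; linarith
  refine ⟨Set.range n, fun m => f ⁻¹' Ioo (g m - 1) (g m + 1),
    Set.infinite_range_of_injective hninj, fun m _ => (isOpen_Ioo).preimage hf,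
    fun m _ => by simp [hg], ?_⟩
  intro x
  refine ⟨f ⁻¹' Ioo (f x - 1) (f x + 1), hf.continuousAt.preimage_mem_nhds
    (Ioo_mem_nhds (by linarith) (by linarith)), ?_⟩
  rintro a ⟨⟨j, rfl⟩, y, hyV, hyU⟩ b ⟨⟨k, rfl⟩, z, hzV, hzU⟩
  simp only [mem_preimage, mem_Ioo] at hyV hyU hzV hzU
  by_contra hab
  have hjk : j ≠ k := fun h => hab (by rw [h])
  have h1 : |g (n j) - f x| < 2 := by
    rw [abs_lt]; constructor <;> linarith
  have h2 : |g (n k) - f x| < 2 := by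
    rw [abs_lt]; constructor <;> linarith
  have h3 : |g (n j) - g (n k)| < 4 := by
    have := abs_sub (g (n j) - f x) (g (n k) - f x)
    calc |g (n j) - g (n k)| = |(g (n j) - f x) - (g (n k) - f x)| := by ring_nf
      _ ≤ |g (n j) - f x| + |g (n k) - f x| := abs_sub _ _
      _ < 4 := by linarith
  have h4 : 4 < |g (n j) - g (n k)| := by
    rcases Nat.lt_or_ge j k with h | h
    · have := hgap j k h
      have habs := abs_sub_abs_le_abs_sub (g (n k)) (g (n j))
      rw [abs_sub_comm]
      linarith
    · have hk : k < j := lt_of_le_of_ne h (Ne.symm hjk)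
      have := hgap k j hk
      have habs := abs_sub_abs_le_abs_sub (g (n j)) (g (n k))
      linarith
  linarith

theorem realcompact_wD {X : Type u} [TopologicalSpace X] (hX : Realcompact X) :
    WD X := by
  obtain ⟨I, e, hE⟩ := hX
  intro d hd hdc hdd
  -- some coordinate of `e` is unbounded on `range d`
  have key : ∃ i : I, ∀ C : ℝ, ∃ m : ℕ, C < |e (d m) i| := by
    by_contra h
    push_neg at h
    -- then each coordinate is bounded, so `e '' range d` lies in a compact box
    have hbdd : ∀ i, BddAbove (Set.range fun m => |e (d m) i|) := by
      intro i
      obtain ⟨C, hC⟩ := h i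
      exact ⟨C, by rintro _ ⟨m, rfl⟩; exact hC m⟩
    set M : I → ℝ := fun i => sSup (Set.range fun m => |e (d m) i|) with hM
    have hMle : ∀ i m, |e (d m) i| ≤ M i := fun i m =>
      le_csSup (hbdd i) ⟨m, rfl⟩
    have hsub : e '' Set.range d ⊆ Set.pi univ fun i => Icc (-(M i)) (M i) := by
      rintro _ ⟨_, ⟨m, rfl⟩, rfl⟩ i _
      have := hMle i m
      exact ⟨by rw [abs_le] at this; linarith [this.1], (le_abs_self _).trans this⟩
    have hKc : IsCompact (Set.pi univ fun i => Icc (-(M i)) (M i)) :=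
      isCompact_univ_pi fun i => isCompact_Icc
    have hCc : IsClosed (e '' Set.range d) := hE.isClosedMap _ hdc
    have himg : IsCompact (e '' Set.range d) := hKc.of_isClosed_subset hCc hsub
    have hDc : IsCompact (Set.range d) := hE.isEmbedding.isCompact_iff.mpr himg
    have hfin : (Set.range d).Finite := hDc.finite ⟨hdd⟩
    exact (Set.infinite_range_of_injective hd) hfin
  obtain ⟨i, hi⟩ := key
  exact wd_of_unbounded_fn d (fun x => e x i)
    ((continuous_apply i).comp hE.continuous) hi
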